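/- For 2×n matrices (n ≥ 2), the polar multiplicities of the generic determinantal variety M_{2,n}^2 = {rank < 2} ⊂ ℂ^{2×n} are e_{2,n}^{1,0} = n, e_{2,n}^{1,1} = 2(n−1), e_{2,n}^{1,2} = n, and e_{2,n}^{1,k} = 0 for k > 2. Equivalently, with G = ℙ^{n−1} × ℙ^1 and S_i, Q_i the tautological sub- and quotient line bundles on the factors, (−1)^{n+2−1−1} ∫_G s_k(Q_1 ⊗ Q_2) · s_{n−k}(S_1 ⊗ S_2) takes these values for k = 0, 1, 2. -/

import Mathlib

open MvPolynomial

namespace Stmt11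

/-- The hyperplane class `a` of the factor `ℙ^{n−1}` in the Chow ring model
`ℤ[a,b]/⟨aⁿ, b²⟩` of `ℙ^{n−1} × ℙ¹`. -/
noncomputable def a : MvPolynomial (Fin 2) ℤ := MvPolynomial.X 0

/-- The hyperplane class `b` of the factor `ℙ¹`. -/
noncomputable def b : MvPolynomial (Fin 2) ℤ := MvPolynomial.X 1

/-- The ideal of relations `⟨aⁿ, b²⟩` presenting the Chow ring of `ℙ^{n−1} × ℙ¹`. -/
noncomputable def chowRel (n : ℕ) : Ideal (MvPolynomial (Fin 2) ℤ) :=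
  Ideal.span {a ^ n, b ^ 2}

/-- The total Chern class of `Q₁ ⊗ Q₂` on `ℙ^{n−1} × ℙ¹` (for `m = 2`, `r = 1`):
`c(Q₁ ⊗ Q₂) = Σ_{i=0}^{n-1} aⁱ (1+b)^{n−1−i}`. -/
noncomputable def cQ (n : ℕ) : MvPolynomial (Fin 2) ℤ :=
  ∑ i ∈ Finset.range n, a ^ i * (1 + b) ^ (n - 1 - i)

/-- The total Chern class of the line bundle `S₁ ⊗ S₂`: `c(S₁ ⊗ S₂) = 1 + a + b`. -/
noncomputable def cS : MvPolynomial (Fin 2) ℤ := 1 + a + b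

/-- Integration over `G = ℙ^{n−1} × ℙ¹`: the coefficient of the fundamental monomial
`a^{n−1}·b`. -/
noncomputable def integrate (n : ℕ) (f : MvPolynomial (Fin 2) ℤ) : ℤ :=
  MvPolynomial.coeff (Finsupp.single (0 : Fin 2) (n - 1) + Finsupp.single (1 : Fin 2) 1) f

/-! ### Auxiliary material -/

lemma an_mem (n : ℕ) : a ^ n ∈ chowRel n := Ideal.subset_span (by simp)
lemma b2_mem (n : ℕ) : b ^ 2 ∈ chowRel n := Ideal.subset_span (by simp)
lemma apow_mem {n m : ℕ} (h : n ≤ m) : a ^ m ∈ chowRel n := by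
  rw [show m = n + (m - n) by omega, pow_add]
  exact Ideal.mul_mem_right _ _ (an_mem n)

noncomputable def fund (n : ℕ) : Fin 2 →₀ ℕ :=
  Finsupp.single (0 : Fin 2) (n - 1) + Finsupp.single (1 : Fin 2) 1

lemma integrate_eq (n : ℕ) (f : MvPolynomial (Fin 2) ℤ) :
    integrate n f = MvPolynomial.coeff (fund n) f := rfl

lemma integrate_kill (n : ℕ) (hn : 1 ≤ n) {p : MvPolynomial (Fin 2) ℤ}
    (hp : p ∈ chowRel n) : integrate n p = 0 := by
  obtain ⟨u, v, rfl⟩ := Ideal.mem_span_pair.1 hp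
  rw [integrate_eq, coeff_add]
  rw [show a ^ n = monomial (Finsupp.single (0 : Fin 2) n) (1 : ℤ) from X_pow_eq_monomial,
      show b ^ 2 = monomial (Finsupp.single (1 : Fin 2) 2) (1 : ℤ) from X_pow_eq_monomial,
      coeff_mul_monomial', coeff_mul_monomial']
  rw [if_neg, if_neg]
  · simp
  · intro h
    have := h 1
    simp [fund] at this
  · intro h
    have := h 0
    simp [fund, Finsupp.single_apply] at this
    omega

lemma integrate_congr (n : ℕ) (hn : 1 ≤ n) {p q : MvPolynomial (Fin 2) ℤ}
    (h : p - q ∈ chowRel n) : integrate n p = integrate n q := by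
  have := integrate_kill n hn h
  rw [integrate_eq, integrate_eq, ← sub_eq_zero, ← coeff_sub]
  exact this

lemma coeff_fund_ab (n : ℕ) : MvPolynomial.coeff (fund n) (a ^ (n-1) * b) = 1 := by
  rw [show a ^ (n-1) * b = monomial (fund n) (1 : ℤ) by
    rw [show b = X 1 from rfl, show a = X 0 from rfl, X_pow_eq_monomial,
      ← pow_one (X 1 : MvPolynomial (Fin 2) ℤ), X_pow_eq_monomial, monomial_mul, fund]
    simp]
  simp [coeff_monomial]

/-! ### The S side -/

lemma hcS (j : ℕ) : homogeneousComponent j cS =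
    if j = 0 then 1 else if j = 1 then a + b else 0 := by
  have h1 : (1 : MvPolynomial (Fin 2) ℤ) ∈ homogeneousSubmodule (Fin 2) ℤ 0 :=
    (mem_homogeneousSubmodule _ _).2 (isHomogeneous_one _ _)
  have hab : a + b ∈ homogeneousSubmodule (Fin 2) ℤ 1 :=
    (mem_homogeneousSubmodule _ _).2 ((isHomogeneous_X _ 0).add (isHomogeneous_X _ 1))
  have : cS = 1 + (a + b) := by rw [cS]; ring
  rw [this, map_add, homogeneousComponent_of_mem h1, homogeneousComponent_of_mem hab]
  rcases j with _ | _ | j <;> simp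

/-- Explicit representative of `s_d(S₁ ⊗ S₂)`. -/
noncomputable def FS (d : ℕ) : MvPolynomial (Fin 2) ℤ :=
  C ((-1 : ℤ)^d) * (a ^ d + C (d : ℤ) * (a ^ (d-1) * b))

lemma sS_eq (n : ℕ) (sS : ℕ → MvPolynomial (Fin 2) ℤ)
    (hsS : ∀ d : ℕ,
      (∑ jk ∈ Finset.HasAntidiagonal.antidiagonal d,
          (MvPolynomial.homogeneousComponent jk.1 cS) * sS jk.2)
        - (if d = 0 then 1 else 0) ∈ chowRel n) :
    ∀ d, Ideal.Quotient.mk (chowRel n) (sS d) = Ideal.Quotient.mk (chowRel n) (FS d) := by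
  intro d
  induction d with
  | zero =>
    have h := hsS 0
    simp only [Finset.Nat.antidiagonal_zero, Finset.sum_singleton, hcS] at h
    norm_num at h
    have hFS : FS 0 = 1 := by simp [FS]
    rw [hFS, Ideal.Quotient.eq]
    exact h
  | succ d ih =>
    have h := hsS (d + 1)
    rw [Finset.Nat.sum_antidiagonal_eq_sum_range_succ_mk] at h
    rw [Finset.sum_range_succ', Finset.sum_range_succ'] at h
    simp only [hcS] at h
    rw [Finset.sum_eq_zero (fun i _ => by simp)] at h
    simp only [Nat.add_sub_cancel, if_neg (Nat.succ_ne_zero d), if_neg (Nat.succ_ne_zero 0),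
      if_pos rfl, one_mul, zero_add, sub_zero] at h
    have hq : Ideal.Quotient.mk (chowRel n) ((a + b) * sS d + sS (d + 1)) = 0 := by
      rw [Ideal.Quotient.eq_zero_iff_mem]
      norm_num at h ⊢
      convert h using 2
    rw [map_add, map_mul, ih] at hq
    have key : Ideal.Quotient.mk (chowRel n) (FS (d+1)) =
        - (Ideal.Quotient.mk (chowRel n) (a + b) * Ideal.Quotient.mk (chowRel n) (FS d)) := by
      rw [← map_mul, ← map_neg, Ideal.Quotient.eq]
      rcases d with _ | e
      · have : FS 1 - -((a + b) * FS 0) = 0 := by simp [FS]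
        rw [this]; exact zero_mem _
      · have : FS (e+2) - -((a + b) * FS (e+1)) =
            C ((-1:ℤ)^(e+1) * ((e:ℤ)+1)) * a^e * b^2 := by
          simp only [FS, eq_intCast, Nat.add_sub_cancel]
          push_cast
          ring
        rw [this]
        exact Ideal.mul_mem_left _ _ (b2_mem n)
    rw [key]
    linear_combination hq

/-! ### The Q side -/

lemma pow_one_add_b (m : ℕ) : ∃ g, (1 + b) ^ m = 1 + C (m : ℤ) * b + b ^ 2 * g := by
  induction m with
  | zero => exact ⟨0, by simp⟩
  | succ m ih =>
    obtain ⟨g, hg⟩ := ih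
    refine ⟨C (m : ℤ) + g + g * b, ?_⟩
    rw [pow_succ, hg]
    push_cast
    rw [map_add, map_one]
    ring

noncomputable def cQ' (n : ℕ) : MvPolynomial (Fin 2) ℤ :=
  ∑ i ∈ Finset.range n, (a ^ i + C ((n : ℤ) - 1 - i) * (a ^ i * b))

lemma cQ_decomp (n : ℕ) (hn : 1 ≤ n) : ∃ G, cQ n = cQ' n + b ^ 2 * G := by
  have key : ∀ i ∈ Finset.range n, ∃ g,
      a ^ i * (1 + b) ^ (n - 1 - i) = a ^ i + C ((n : ℤ) - 1 - i) * (a ^ i * b) + b ^ 2 * g := by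
    intro i hi
    obtain ⟨g, hg⟩ := pow_one_add_b (n - 1 - i)
    refine ⟨a ^ i * g, ?_⟩
    rw [hg]
    have : ((n - 1 - i : ℕ) : ℤ) = (n : ℤ) - 1 - i := by
      have := Finset.mem_range.1 hi; omega
    rw [this]; ring
  choose g hg using key
  refine ⟨∑ i ∈ (Finset.range n).attach, g i.1 i.2, ?_⟩
  rw [cQ, cQ', Finset.mul_sum, ← Finset.sum_attach (Finset.range n)
    (fun i => a ^ i + C ((n : ℤ) - 1 - i) * (a ^ i * b)),
    ← Finset.sum_add_distrib, ← Finset.sum_attach (Finset.range n)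
    (fun i => a ^ i * (1 + b) ^ (n - 1 - i))]
  exact Finset.sum_congr rfl fun i _ => hg i.1 i.2

lemma comp_b2 (G : MvPolynomial (Fin 2) ℤ) (j : ℕ) (n : ℕ) :
    homogeneousComponent j (b ^ 2 * G) ∈ chowRel n := by
  induction G using MvPolynomial.induction_on' with
  | monomial d r =>
    rw [show b ^ 2 = monomial (Finsupp.single (1 : Fin 2) 2) (1 : ℤ) from X_pow_eq_monomial,
      monomial_mul]
    have hm : (monomial (Finsupp.single (1 : Fin 2) 2 + d)) (1 * r) ∈
        homogeneousSubmodule (Fin 2) ℤ ((Finsupp.single (1 : Fin 2) 2 + d).degree) :=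
      (mem_homogeneousSubmodule _ _).2 (isHomogeneous_monomial _ rfl)
    rw [homogeneousComponent_of_mem hm]
    split
    · rw [← monomial_mul, ← X_pow_eq_monomial]
      exact Ideal.mul_mem_right _ _ (b2_mem n)
    · exact zero_mem _
  | add p q hp hq =>
    rw [mul_add, map_add]
    exact add_mem hp hq

/-- Explicit representative of the degree-`j` homogeneous component of `c(Q₁ ⊗ Q₂)`. -/
noncomputable def H (n : ℕ) : ℕ → MvPolynomial (Fin 2) ℤ
  | 0 => 1
  | (k+1) => a ^ (k+1) + C ((n : ℤ) - 1 - k) * (a ^ k * b)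

lemma hcQ (n : ℕ) (hn : 1 ≤ n) (j : ℕ) :
    Ideal.Quotient.mk (chowRel n) (homogeneousComponent j (cQ n)) =
    Ideal.Quotient.mk (chowRel n) (H n j) := by
  obtain ⟨G, hG⟩ := cQ_decomp n hn
  rw [hG, map_add, map_add, Ideal.Quotient.eq_zero_iff_mem.2 (comp_b2 G j n), add_zero]
  have term : ∀ (j i : ℕ),
      homogeneousComponent j (a ^ i + C ((n : ℤ) - 1 - i) * (a ^ i * b)) =
      (if j = i then a ^ i else 0) +
      C ((n : ℤ) - 1 - i) * (if j = i + 1 then a ^ i * b else 0) := by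
    intro j i
    rw [map_add, homogeneousComponent_C_mul,
      homogeneousComponent_of_mem ((mem_homogeneousSubmodule _ _).2
        (show (a ^ i).IsHomogeneous i from isHomogeneous_X_pow 0 i)),
      homogeneousComponent_of_mem ((mem_homogeneousSubmodule _ _).2
        (show (a ^ i * b).IsHomogeneous (i + 1) by
          simpa [a, b] using (isHomogeneous_X_pow (R := ℤ) 0 i).mul (isHomogeneous_X ℤ 1)))]
  rcases j with _ | k
  · have hcomp : homogeneousComponent 0 (cQ' n) = 1 := by
      rw [cQ', map_sum]
      simp only [term]
      rw [Finset.sum_add_distrib, Finset.sum_ite_eq]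
      simp only [Finset.mem_range]
      rw [if_pos (by omega)]
      simp
    rw [hcomp]
    rfl
  · have hcomp : homogeneousComponent (k+1) (cQ' n) =
        (if k + 1 ∈ Finset.range n then a ^ (k+1) else 0) +
        (if k ∈ Finset.range n then C ((n : ℤ) - 1 - k) * (a ^ k * b) else 0) := by
      rw [cQ', map_sum]
      simp only [term]
      rw [Finset.sum_add_distrib, Finset.sum_ite_eq]
      congr 1
      simp only [mul_ite, mul_zero, Nat.add_right_cancel_iff]
      rw [Finset.sum_ite_eq]
    rw [hcomp]
    simp only [Finset.mem_range, H]
    by_cases h1 : k + 1 < n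
    · rw [if_pos h1, if_pos (by omega)]
    · rw [if_neg h1]
      by_cases h2 : k < n
      · have e1 : Ideal.Quotient.mk (chowRel n) (a^(k+1)) = 0 :=
          Ideal.Quotient.eq_zero_iff_mem.2 (apow_mem (by omega))
        rw [if_pos h2, show ((n:ℤ) - 1 - k) = 0 by omega]
        simp [e1]
      · have e1 : Ideal.Quotient.mk (chowRel n) (a^(k+1)) = 0 :=
          Ideal.Quotient.eq_zero_iff_mem.2 (apow_mem (by omega))
        have e2 : Ideal.Quotient.mk (chowRel n) (a^k) = 0 :=
          Ideal.Quotient.eq_zero_iff_mem.2 (apow_mem (by omega))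
        rw [if_neg h2]
        simp [map_add, map_mul, e1, e2]

/-- Explicit representative of `s_d(Q₁ ⊗ Q₂)`. -/
noncomputable def TQ (n : ℕ) : ℕ → MvPolynomial (Fin 2) ℤ
  | 0 => 1
  | 1 => -(a + C ((n : ℤ) - 1) * b)
  | 2 => C (n : ℤ) * (a * b)
  | _ => 0

lemma TQ_ge3 (n m : ℕ) (h : 3 ≤ m) : TQ n m = 0 := by
  rcases m with _ | _ | _ | m
  · omega
  · omega
  · omega
  · rfl

lemma VQ (n : ℕ) (d : ℕ) :
    Ideal.Quotient.mk (chowRel n) (∑ j ∈ Finset.range (d+1), H n j * TQ n (d - j)) =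
    if d = 0 then 1 else 0 := by
  rcases d with _ | _ | _ | e
  · simp [H, TQ]
  · rw [if_neg (by omega)]
    have : (∑ j ∈ Finset.range 2, H n j * TQ n (1 - j)) = 0 := by
      rw [Finset.sum_range_succ, Finset.sum_range_one]
      simp only [H, TQ]
      push_cast
      ring
    rw [this, map_zero]
  · rw [if_neg (by omega)]
    have : (∑ j ∈ Finset.range 3, H n j * TQ n (2 - j)) =
        - C ((n:ℤ) - 1)^2 * b^2 := by
      rw [Finset.sum_range_succ, Finset.sum_range_succ, Finset.sum_range_one]
      simp only [H, TQ, eq_intCast]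
      push_cast
      ring
    rw [this]
    refine Ideal.Quotient.eq_zero_iff_mem.2 ?_
    exact Ideal.mul_mem_left _ _ (b2_mem n)
  · rw [if_neg (by omega)]
    rw [Finset.sum_range_succ, Finset.sum_range_succ, Finset.sum_range_succ]
    rw [Finset.sum_eq_zero (fun j hj => by
      rw [TQ_ge3 n _ (by simp at hj; omega), mul_zero])]
    have : H n (e+1) * TQ n (e + 3 - (e+1)) + H n (e+2) * TQ n (e + 3 - (e+2)) +
        H n (e+3) * TQ n (e + 3 - (e+3)) =
        C (2*(n:ℤ) - e - 2) * (a^(e+1) * b^2) := by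
      rw [show e + 3 - (e+1) = 2 by omega, show e + 3 - (e+2) = 1 by omega,
        show e + 3 - (e+3) = 0 by omega]
      simp only [H, TQ, eq_intCast]
      push_cast
      ring
    rw [zero_add, this]
    refine Ideal.Quotient.eq_zero_iff_mem.2 ?_
    exact Ideal.mul_mem_left _ _ (Ideal.mul_mem_left _ _ (b2_mem n))

lemma sQ_eq (n : ℕ) (hn : 1 ≤ n) (sQ : ℕ → MvPolynomial (Fin 2) ℤ)
    (hsQ : ∀ d : ℕ,
      (∑ jk ∈ Finset.HasAntidiagonal.antidiagonal d,
          (MvPolynomial.homogeneousComponent jk.1 (cQ n)) * sQ jk.2)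
        - (if d = 0 then 1 else 0) ∈ chowRel n) :
    ∀ d, Ideal.Quotient.mk (chowRel n) (sQ d) = Ideal.Quotient.mk (chowRel n) (TQ n d) := by
  intro d
  induction d using Nat.strong_induction_on with
  | _ d ih =>
    have h := hsQ d
    rw [Finset.Nat.sum_antidiagonal_eq_sum_range_succ_mk] at h
    have h2 := Ideal.Quotient.eq.2 (show _ - _ ∈ chowRel n from h)
    rw [map_sum, Finset.sum_range_succ'] at h2
    rw [apply_ite (Ideal.Quotient.mk (chowRel n)), map_one, map_zero] at h2
    have hsum : (∑ j ∈ Finset.range d,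
          Ideal.Quotient.mk (chowRel n) (homogeneousComponent (j+1) (cQ n) * sQ (d - (j+1)))) =
        ∑ j ∈ Finset.range d,
          Ideal.Quotient.mk (chowRel n) (H n (j+1)) *
          Ideal.Quotient.mk (chowRel n) (TQ n (d - (j+1))) := by
      refine Finset.sum_congr rfl fun j hj => ?_
      have hj' := Finset.mem_range.1 hj
      rw [map_mul, hcQ n hn, ih _ (by omega)]
    rw [hsum] at h2
    have h0 : Ideal.Quotient.mk (chowRel n) (homogeneousComponent 0 (cQ n) * sQ (d - 0)) =
        Ideal.Quotient.mk (chowRel n) (sQ d) := by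
      rw [map_mul, hcQ n hn, show H n 0 = 1 from rfl, map_one, one_mul, Nat.sub_zero]
    rw [h0] at h2
    have hV := VQ n d
    rw [map_sum, Finset.sum_range_succ'] at hV
    have hV0 : Ideal.Quotient.mk (chowRel n) (H n 0 * TQ n (d - 0)) =
        Ideal.Quotient.mk (chowRel n) (TQ n d) := by
      rw [show H n 0 = 1 from rfl, one_mul, Nat.sub_zero]
    rw [hV0] at hV
    have hVsum : (∑ j ∈ Finset.range d,
          Ideal.Quotient.mk (chowRel n) (H n (j+1) * TQ n (d - (j+1)))) =
        ∑ j ∈ Finset.range d,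
          Ideal.Quotient.mk (chowRel n) (H n (j+1)) *
          Ideal.Quotient.mk (chowRel n) (TQ n (d - (j+1))) := by
      exact Finset.sum_congr rfl fun j hj => map_mul _ _ _
    rw [hVsum] at hV
    linear_combination h2 - hV

theorem polar_multiplicities_two_by_n (n : ℕ) (hn : 2 ≤ n)
    (sQ sS : ℕ → MvPolynomial (Fin 2) ℤ)
    (hsQhom : ∀ k, (sQ k).IsHomogeneous k)
    (hsShom : ∀ k, (sS k).IsHomogeneous k)
    (hsQ : ∀ d : ℕ,
      (∑ jk ∈ Finset.HasAntidiagonal.antidiagonal d,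
          (MvPolynomial.homogeneousComponent jk.1 (cQ n)) * sQ jk.2)
        - (if d = 0 then 1 else 0) ∈ chowRel n)
    (hsS : ∀ d : ℕ,
      (∑ jk ∈ Finset.HasAntidiagonal.antidiagonal d,
          (MvPolynomial.homogeneousComponent jk.1 cS) * sS jk.2)
        - (if d = 0 then 1 else 0) ∈ chowRel n) :
    ∀ k ≤ n, (-1 : ℤ) ^ n * integrate n (sQ k * sS (n - k))
      = if k = 0 then (n : ℤ) else if k = 1 then 2 * ((n : ℤ) - 1)
        else if k = 2 then (n : ℤ) else 0 := by
  have hn1 : 1 ≤ n := by omega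
  have hS := sS_eq n sS hsS
  have hQ := sQ_eq n hn1 sQ hsQ
  obtain ⟨m, rfl⟩ : ∃ m, n = m + 2 := ⟨n - 2, by omega⟩
  intro k hk
  have hmk : ∀ p q : MvPolynomial (Fin 2) ℤ,
      Ideal.Quotient.mk (chowRel (m+2)) p = Ideal.Quotient.mk (chowRel (m+2)) q →
      integrate (m+2) p = integrate (m+2) q := by
    intro p q h
    exact integrate_congr _ (by omega) (Ideal.Quotient.eq.1 h)
  rcases k with _ | _ | _ | k
  · -- k = 0
    rw [if_pos rfl]
    have e1 : integrate (m+2) (sQ 0 * sS (m + 2 - 0)) =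
        integrate (m+2) (C ((-1:ℤ)^(m+2) * ((m:ℤ)+2)) * (a ^ (m+2-1) * b)) := by
      apply hmk
      rw [map_mul, hQ 0, hS (m + 2 - 0), ← map_mul, Nat.sub_zero, Ideal.Quotient.eq]
      have : TQ (m+2) 0 * FS (m+2) -
          C ((-1:ℤ)^(m+2) * ((m:ℤ)+2)) * (a ^ (m+2-1) * b) =
          C ((-1:ℤ)^(m+2)) * a^(m+2) := by
        simp only [TQ, FS, eq_intCast, Nat.add_sub_cancel]
        push_cast
        ring
      rw [this]
      exact Ideal.mul_mem_left _ _ (an_mem (m+2))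
    rw [e1, integrate_eq, coeff_C_mul, coeff_fund_ab, mul_one]
    have h2 : (-1:ℤ)^(m+2) * (-1:ℤ)^(m+2) = 1 := by
      rw [← pow_add]; exact Even.neg_one_pow ⟨m+2, by ring⟩
    push_cast
    linear_combination ((m:ℤ)+2) * h2
  · -- k = 1
    rw [if_neg (by omega), if_pos rfl]
    have e1 : integrate (m+2) (sQ 1 * sS (m + 2 - 1)) =
        integrate (m+2) (C ((-1:ℤ)^(m+1) * (-2) * ((m:ℤ)+1)) * (a ^ (m+2-1) * b)) := by
      apply hmk
      rw [map_mul, hQ 1, hS (m + 2 - 1), ← map_mul, Ideal.Quotient.eq]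
      have : TQ (m+2) 1 * FS (m + 2 - 1) -
          C ((-1:ℤ)^(m+1) * (-2) * ((m:ℤ)+1)) * (a ^ (m+2-1) * b) =
          (- C ((-1:ℤ)^(m+1))) * a^(m+2) +
          (- C ((-1:ℤ)^(m+1) * ((m:ℤ)+1)^2) * a^m) * b^2 := by
        rw [show m + 2 - 1 = m + 1 by omega]
        simp only [TQ, FS, eq_intCast, Nat.add_sub_cancel]
        push_cast
        ring
      rw [this]
      exact add_mem (Ideal.mul_mem_left _ _ (an_mem (m+2)))
        (Ideal.mul_mem_left _ _ (b2_mem (m+2)))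
    rw [e1, integrate_eq, coeff_C_mul, coeff_fund_ab, mul_one]
    have : (-1:ℤ)^(m+2) * (-1)^(m+1) = -1 := by
      rw [← pow_add]
      exact Odd.neg_one_pow ⟨m+1, by ring⟩
    push_cast
    rw [show ((-1:ℤ))^(m+2) * ((-1:ℤ)^(m+1) * (-2) * ((m:ℤ)+1)) =
      ((-1:ℤ)^(m+2) * (-1)^(m+1)) * ((-2) * ((m:ℤ)+1)) by ring, this]
    ring
  · -- k = 2
    rw [if_neg (by omega), if_neg (by omega), if_pos rfl]
    have e1 : integrate (m+2) (sQ 2 * sS (m + 2 - 2)) =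
        integrate (m+2) (C ((-1:ℤ)^m * ((m:ℤ)+2)) * (a ^ (m+2-1) * b)) := by
      apply hmk
      rw [map_mul, hQ 2, hS (m + 2 - 2), ← map_mul, Ideal.Quotient.eq]
      have : TQ (m+2) 2 * FS (m + 2 - 2) -
          C ((-1:ℤ)^m * ((m:ℤ)+2)) * (a ^ (m+2-1) * b) =
          (C ((-1:ℤ)^m * ((m:ℤ)+2) * m) * (a * a^(m-1))) * b^2 := by
        rw [show m + 2 - 2 = m by omega, show m + 2 - 1 = m + 1 by omega]
        simp only [TQ, FS, eq_intCast]
        push_cast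
        ring
      rw [this]
      exact Ideal.mul_mem_left _ _ (b2_mem (m+2))
    rw [e1, integrate_eq, coeff_C_mul, coeff_fund_ab, mul_one]
    have h2 : (-1:ℤ)^(m+2) * (-1:ℤ)^m = 1 := by
      rw [← pow_add]; exact Even.neg_one_pow ⟨m+1, by ring⟩
    push_cast
    linear_combination ((m:ℤ)+2) * h2
  · -- k ≥ 3
    rw [if_neg (by omega), if_neg (by omega), if_neg (by omega)]
    have hmem : sQ (k+3) ∈ chowRel (m+2) := by
      have := hQ (k+3)
      rw [TQ_ge3 _ _ (by omega), map_zero, Ideal.Quotient.eq_zero_iff_mem] at this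
      exact this
    rw [integrate_kill _ (by omega) (Ideal.mul_mem_right _ _ hmem), mul_zero]

end Stmt11
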